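/- Gradient descent with relative gradient error α ∈ [0,1), step h = (1-α)/(L(1+α)²), on an L-smooth function with μ-PL condition converges linearly: f(x^N) - f* ≤ (1 - (μ/L)·(1-α)²/(1+α)²)^N (f(x^0) - f*). -/

import Mathlib

open RealInnerProductSpace

lemma descent_lemma {n : ℕ} (f : EuclideanSpace ℝ (Fin n) → ℝ)
    (g : EuclideanSpace ℝ (Fin n) → EuclideanSpace ℝ (Fin n)) (L : ℝ)
    (hgrad : ∀ x, HasGradientAt f (g x) x)
    (hLip : ∀ x y, ‖g x - g y‖ ≤ L * ‖x - y‖) (x y : EuclideanSpace ℝ (Fin n)) :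
    f y ≤ f x + ⟪g x, y - x⟫ + L / 2 * ‖y - x‖ ^ 2 := by
  set v := y - x with hv
  have hφ : ∀ t : ℝ, HasDerivAt (fun t : ℝ => f (x + t • v)) ⟪g (x + t • v), v⟫ t := by
    intro t
    have h1 : HasDerivAt (fun t : ℝ => x + t • v) v t := by
      simpa using ((hasDerivAt_id t).smul_const v).const_add x
    have h2 := (hasGradientAt_iff_hasFDerivAt.mp (hgrad (x + t • v))).comp_hasDerivAt t h1
    have h3 : HasDerivAt (f ∘ fun t : ℝ => x + t • v) ⟪g (x + t • v), v⟫ t := by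
      simpa using h2
    exact h3
  set ψ : ℝ → ℝ := fun t => f x + t * ⟪g x, v⟫ + L / 2 * (t ^ 2 * ‖v‖ ^ 2) - f (x + t • v)
    with hψdef
  have hψ : ∀ t : ℝ, HasDerivAt ψ (⟪g x, v⟫ + L / 2 * (2 * t * ‖v‖ ^ 2)
      - ⟪g (x + t • v), v⟫) t := by
    intro t
    have h1 : HasDerivAt (fun t : ℝ => f x + t * ⟪g x, v⟫ + L / 2 * (t ^ 2 * ‖v‖ ^ 2))
        (⟪g x, v⟫ + L / 2 * (2 * t * ‖v‖ ^ 2)) t := by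
      have ha : HasDerivAt (fun t : ℝ => t * ⟪g x, v⟫) ⟪g x, v⟫ t := by
        simpa using (hasDerivAt_id t).mul_const ⟪g x, v⟫
      have hb : HasDerivAt (fun t : ℝ => L / 2 * (t ^ 2 * ‖v‖ ^ 2))
          (L / 2 * (2 * t * ‖v‖ ^ 2)) t := by
        have := ((hasDerivAt_pow 2 t).mul_const (‖v‖ ^ 2)).const_mul (L / 2)
        simpa [mul_comm, mul_assoc, mul_left_comm] using this
      exact (ha.const_add (f x)).add hb
    exact h1.sub (hφ t)
  have hmono : MonotoneOn ψ (Set.Icc 0 1) := by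
    apply monotoneOn_of_deriv_nonneg (convex_Icc 0 1)
    · exact fun t _ => (hψ t).differentiableAt.continuousAt.continuousWithinAt
    · exact fun t _ => (hψ t).differentiableAt.differentiableWithinAt
    · intro t ht
      rw [interior_Icc] at ht
      rw [(hψ t).deriv]
      have key : ⟪g (x + t • v), v⟫ - ⟪g x, v⟫ ≤ L * t * ‖v‖ ^ 2 := by
        have h1 : ⟪g (x + t • v) - g x, v⟫ ≤ ‖g (x + t • v) - g x‖ * ‖v‖ :=
          real_inner_le_norm _ _
        have h2 : ‖g (x + t • v) - g x‖ ≤ L * (t * ‖v‖) := by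
          have := hLip (x + t • v) x
          simpa [norm_smul, abs_of_pos ht.1] using this
        calc ⟪g (x + t • v), v⟫ - ⟪g x, v⟫ = ⟪g (x + t • v) - g x, v⟫ := by
              rw [inner_sub_left]
          _ ≤ ‖g (x + t • v) - g x‖ * ‖v‖ := h1
          _ ≤ L * (t * ‖v‖) * ‖v‖ := by
              apply mul_le_mul_of_nonneg_right h2 (norm_nonneg _)
          _ = L * t * ‖v‖ ^ 2 := by ring
      nlinarith [key]
  have h01 := hmono (Set.left_mem_Icc.mpr zero_le_one) (Set.right_mem_Icc.mpr zero_le_one)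
    zero_le_one
  have h0 : ψ 0 = 0 := by simp [hψdef]
  have h1 : ψ 1 = f x + ⟪g x, v⟫ + L / 2 * ‖v‖ ^ 2 - f y := by
    simp [hψdef, hv]
  rw [h0, h1] at h01
  linarith

/-- Scalar one-step estimate. -/
lemma key_step (L μ α fstar fk f1 a b i : ℝ)
    (hL : 0 < L) (hμ : 0 < μ) (hα0 : 0 ≤ α) (hα1 : α < 1)
    (hd : f1 ≤ fk - (1 - α) / (L * (1 + α) ^ 2) * i
      + L / 2 * (((1 - α) / (L * (1 + α) ^ 2)) ^ 2 * b ^ 2))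
    (hi : (1 - α) * a ^ 2 ≤ i) (hb : b ^ 2 ≤ (1 + α) ^ 2 * a ^ 2)
    (hPLk : (fk - fstar) * (2 * μ) ≤ a ^ 2) (hD : fstar ≤ fk) :
    f1 - fstar ≤ (1 - μ / L * ((1 - α) ^ 2 / (1 + α) ^ 2)) * (fk - fstar) := by
  have h1α : (0:ℝ) < 1 + α := by linarith
  have hh0 : (0:ℝ) < (1 - α) / (L * (1 + α) ^ 2) := by
    apply div_pos (by linarith); positivity
  have t1 : (1 - α) / (L * (1 + α) ^ 2) * ((1 - α) * a ^ 2)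
      ≤ (1 - α) / (L * (1 + α) ^ 2) * i := mul_le_mul_of_nonneg_left hi hh0.le
  have t2 : L / 2 * (((1 - α) / (L * (1 + α) ^ 2)) ^ 2 * b ^ 2)
      ≤ L / 2 * (((1 - α) / (L * (1 + α) ^ 2)) ^ 2 * ((1 + α) ^ 2 * a ^ 2)) := by
    apply mul_le_mul_of_nonneg_left _ (by positivity)
    exact mul_le_mul_of_nonneg_left hb (by positivity)
  have heq : fk - (1 - α) / (L * (1 + α) ^ 2) * ((1 - α) * a ^ 2)
      + L / 2 * (((1 - α) / (L * (1 + α) ^ 2)) ^ 2 * ((1 + α) ^ 2 * a ^ 2))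
      = fk - (1 - α) ^ 2 / (2 * L * (1 + α) ^ 2) * a ^ 2 := by
    field_simp
    ring
  have hc2 : f1 ≤ fk - (1 - α) ^ 2 / (2 * L * (1 + α) ^ 2) * a ^ 2 := by linarith
  have hcpos : (0:ℝ) < (1 - α) ^ 2 / (2 * L * (1 + α) ^ 2) := by
    apply div_pos (by nlinarith) (by positivity)
  have t3 : (1 - α) ^ 2 / (2 * L * (1 + α) ^ 2) * ((fk - fstar) * (2 * μ))
      ≤ (1 - α) ^ 2 / (2 * L * (1 + α) ^ 2) * a ^ 2 :=
    mul_le_mul_of_nonneg_left hPLk hcpos.le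
  have heq2 : (1 - μ / L * ((1 - α) ^ 2 / (1 + α) ^ 2)) * (fk - fstar)
      = (fk - fstar) - (1 - α) ^ 2 / (2 * L * (1 + α) ^ 2) * ((fk - fstar) * (2 * μ)) := by
    field_simp
  linarith

/-- Gradient descent with relative gradient error `α ∈ [0,1)` and step
`h = (1-α)/(L(1+α)²)` on an `L`-smooth function with the `μ`-PL condition
converges linearly:
`f(x^N) - f* ≤ (1 - (μ/L)(1-α)²/(1+α)²)^N (f(x⁰) - f*)`. -/
theorem relative_error_gradient_descent_PL_rate {n : ℕ}
    (f : EuclideanSpace ℝ (Fin n) → ℝ)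
    (g gt : EuclideanSpace ℝ (Fin n) → EuclideanSpace ℝ (Fin n)) (L μ α fstar : ℝ)
    (hL : 0 < L) (hμ : 0 < μ) (hμL : μ ≤ L) (hα0 : 0 ≤ α) (hα1 : α < 1)
    (hgrad : ∀ x, HasGradientAt f (g x) x)
    (hLip : ∀ x y, ‖g x - g y‖ ≤ L * ‖x - y‖)
    (herr : ∀ x, ‖gt x - g x‖ ≤ α * ‖g x‖)
    (hPL : ∀ x, f x - fstar ≤ ‖g x‖ ^ 2 / (2 * μ))
    (hlb : ∀ x, fstar ≤ f x)
    (x : ℕ → EuclideanSpace ℝ (Fin n))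
    (hstep : ∀ k, x (k + 1) = x k - ((1 - α) / (L * (1 + α) ^ 2)) • gt (x k)) :
    ∀ N, f (x N) - fstar
      ≤ (1 - μ / L * ((1 - α) ^ 2 / (1 + α) ^ 2)) ^ N * (f (x 0) - fstar) := by
  have h1α : (0:ℝ) < 1 + α := by linarith
  have h1α2 : (0:ℝ) < (1 + α) ^ 2 := by positivity
  have hρ0 : 0 ≤ 1 - μ / L * ((1 - α) ^ 2 / (1 + α) ^ 2) := by
    have h1 : μ / L ≤ 1 := div_le_one_of_le₀ hμL hL.le
    have h2 : (1 - α) ^ 2 / (1 + α) ^ 2 ≤ 1 := by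
      rw [div_le_one h1α2]; nlinarith
    have h3 : μ / L * ((1 - α) ^ 2 / (1 + α) ^ 2) ≤ 1 :=
      mul_le_one₀ h1 (by positivity) h2
    linarith
  have hone : ∀ k, f (x (k + 1)) - fstar
      ≤ (1 - μ / L * ((1 - α) ^ 2 / (1 + α) ^ 2)) * (f (x k) - fstar) := by
    intro k
    have hd := descent_lemma f g L hgrad hLip (x k) (x (k + 1))
    have hdiff : x (k + 1) - x k = -((((1 - α) / (L * (1 + α) ^ 2))) • gt (x k)) := by
      rw [hstep k]; abel
    rw [hdiff] at hd
    rw [inner_neg_right, real_inner_smul_right, norm_neg, norm_smul, mul_pow,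
      Real.norm_eq_abs, sq_abs] at hd
    have hiGGt : (1 - α) * ‖g (x k)‖ ^ 2 ≤ ⟪g (x k), gt (x k)⟫ := by
      have e1 : ⟪g (x k), gt (x k)⟫ = ‖g (x k)‖ ^ 2 + ⟪g (x k), gt (x k) - g (x k)⟫ := by
        rw [inner_sub_right, real_inner_self_eq_norm_sq]; ring
      have e2 : |⟪g (x k), gt (x k) - g (x k)⟫| ≤ ‖g (x k)‖ * ‖gt (x k) - g (x k)‖ :=
        abs_real_inner_le_norm _ _
      have e3 : ‖gt (x k) - g (x k)‖ ≤ α * ‖g (x k)‖ := herr (x k)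
      have e4 : -(α * ‖g (x k)‖ ^ 2) ≤ ⟪g (x k), gt (x k) - g (x k)⟫ := by
        have := neg_abs_le ⟪g (x k), gt (x k) - g (x k)⟫
        nlinarith [norm_nonneg (g (x k))]
      nlinarith
    have hnGt : ‖gt (x k)‖ ^ 2 ≤ (1 + α) ^ 2 * ‖g (x k)‖ ^ 2 := by
      have e1 : ‖gt (x k)‖ ≤ ‖gt (x k) - g (x k)‖ + ‖g (x k)‖ := by
        simpa using norm_add_le (gt (x k) - g (x k)) (g (x k))
      have e3 : ‖gt (x k) - g (x k)‖ ≤ α * ‖g (x k)‖ := herr (x k)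
      nlinarith [norm_nonneg (gt (x k)), norm_nonneg (g (x k))]
    have hPLk : (f (x k) - fstar) * (2 * μ) ≤ ‖g (x k)‖ ^ 2 := by
      have h2μ : (0:ℝ) < 2 * μ := by positivity
      exact (le_div_iff₀ h2μ).mp (hPL (x k))
    exact key_step L μ α fstar (f (x k)) (f (x (k + 1))) ‖g (x k)‖ ‖gt (x k)‖
      ⟪g (x k), gt (x k)⟫ hL hμ hα0 hα1 (by linarith) hiGGt hnGt hPLk (hlb (x k))
  intro N
  induction N with
  | zero => simp
  | succ N ih =>
    calc f (x (N + 1)) - fstar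
        ≤ (1 - μ / L * ((1 - α) ^ 2 / (1 + α) ^ 2)) * (f (x N) - fstar) := hone N
      _ ≤ (1 - μ / L * ((1 - α) ^ 2 / (1 + α) ^ 2))
          * ((1 - μ / L * ((1 - α) ^ 2 / (1 + α) ^ 2)) ^ N * (f (x 0) - fstar)) :=
          mul_le_mul_of_nonneg_left ih hρ0
      _ = (1 - μ / L * ((1 - α) ^ 2 / (1 + α) ^ 2)) ^ (N + 1) * (f (x 0) - fstar) := by ring
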